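/- Let $q_0 \in \mathbb{R}$ and $q \in \mathbb{R}^3$ satisfy $q_0^2 + \|q\|^2 = 1$ and $q_0 \neq 0$, and let $\Gamma = \tfrac{1}{2}(q_0 I_3 + q^{\times})$. Then $\Gamma$ is invertible and the operator norm of its inverse equals $2/|q_0|$, i.e. $\|\Gamma^{-1}\| = \frac{2}{|q_0|}$. -/

import Mathlib

open Matrix

set_option maxHeartbeats 1000000
set_option linter.unnecessarySeqFocus false

noncomputable def Bmat (a b c d : ℝ) : Matrix (Fin 3) (Fin 3) ℝ :=
  !![2*(a^2+b^2)/a, 2*(a*d+b*c)/a, 2*(-(a*c)+b*d)/a;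
     2*(-(a*d)+b*c)/a, 2*(a^2+c^2)/a, 2*(a*b+c*d)/a;
     2*(a*c+b*d)/a, 2*(-(a*b)+c*d)/a, 2*(a^2+d^2)/a]

lemma mulGB (a b c d : ℝ) (ha : a ≠ 0) (h : a^2+(b^2+c^2+d^2)=1) :
    !![a/2, -d/2, c/2; d/2, a/2, -b/2; -c/2, b/2, a/2] * Bmat a b c d = 1 := by
  ext i j
  fin_cases i <;> fin_cases j <;>
    simp [Bmat, Matrix.mul_apply, Fin.sum_univ_three, Matrix.one_apply] <;>
    field_simp <;>
    first
      | linear_combination (-2*a) * h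
      | linear_combination (8*a^3-2*a) * h
      | linear_combination (2*a) * h
      | linear_combination (8*a^3) * h
      | linear_combination a * h
      | ring

lemma mulVec_sq_bound (a b c d : ℝ) (ha : a ≠ 0) (h : a^2+(b^2+c^2+d^2)=1)
    (x : Fin 3 → ℝ) :
    ∑ i, ((Bmat a b c d).mulVec x i)^2 ≤ 4/a^2 * ∑ i, (x i)^2 := by
  have ha2 : (0:ℝ) < a^2 := by positivity
  rw [div_mul_eq_mul_div, le_div_iff₀ ha2]
  simp [Bmat, Matrix.mulVec, dotProduct, Fin.sum_univ_three]
  field_simp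
  nlinarith [sq_nonneg (b * x 1 - c * x 0), sq_nonneg (b * x 2 - d * x 0),
    sq_nonneg (c * x 2 - d * x 1), sq_nonneg (x 0), sq_nonneg (x 1), sq_nonneg (x 2), h,
    sq_nonneg (b * x 0 + c * x 1 + d * x 2), sq_nonneg a, sq_nonneg (a*x 0), sq_nonneg (a*x 1),
    sq_nonneg (a*x 2)]

lemma mulVec_self (a b c d : ℝ) (ha : a ≠ 0) (h : a^2+(b^2+c^2+d^2)=1)
    (x : Fin 3 → ℝ) (hx0 : x 0 = b) (hx1 : x 1 = c) (hx2 : x 2 = d) :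
    (Bmat a b c d).mulVec x = fun i => (2/a) * x i := by
  funext i
  fin_cases i <;>
    simp [Bmat, Matrix.mulVec, dotProduct, Fin.sum_univ_three, hx0, hx1, hx2] <;>
    field_simp <;>
    first
      | linear_combination (2*b) * h
      | linear_combination (2*c) * h
      | linear_combination (2*d) * h
      | linear_combination b * h
      | linear_combination c * h
      | linear_combination d * h


/-- The cross-product (skew-symmetric) matrix `q^×` of `q ∈ ℝ³`. -/
def crossMat (q : EuclideanSpace ℝ (Fin 3)) : Matrix (Fin 3) (Fin 3) ℝ :=
  !![0, -q 2, q 1; q 2, 0, -q 0; -q 1, q 0, 0]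

/-- If `q₀² + ‖q‖² = 1`, `q₀ ≠ 0` and `Γ = ½(q₀ I₃ + q^×)`, then `Γ` is invertible and
the operator norm (induced by the Euclidean norm) of its inverse is `2/|q₀|`
(Remark 1 of the paper). -/
theorem gamma_inv_opNorm (q0 : ℝ) (q : EuclideanSpace ℝ (Fin 3))
    (hunit : q0 ^ 2 + ‖q‖ ^ 2 = 1) (hq0 : q0 ≠ 0)
    (Γ : Matrix (Fin 3) (Fin 3) ℝ)
    (hΓ : Γ = (1 / 2 : ℝ) • (q0 • (1 : Matrix (Fin 3) (Fin 3) ℝ) + crossMat q)) :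
    IsUnit Γ ∧ ‖Matrix.toEuclideanCLM (𝕜 := ℝ) Γ⁻¹‖ = 2 / |q0| := by
  have hq : q0 ^ 2 + ((q 0) ^ 2 + (q 1) ^ 2 + (q 2) ^ 2) = 1 := by
    have h2 : ‖q‖ ^ 2 = (q 0) ^ 2 + (q 1) ^ 2 + (q 2) ^ 2 := by
      rw [EuclideanSpace.norm_eq, Real.sq_sqrt (by positivity)]
      simp [Fin.sum_univ_three, Real.norm_eq_abs, sq_abs]
    linarith [hunit, h2]
  have hΓ' : Γ = !![q0/2, -(q 2)/2, q 1/2; q 2/2, q0/2, -(q 0)/2;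
                    -(q 1)/2, q 0/2, q0/2] := by
    rw [hΓ]
    ext i j
    fin_cases i <;> fin_cases j <;>
      simp [crossMat, Matrix.one_apply] <;> ring
  set B : Matrix (Fin 3) (Fin 3) ℝ := Bmat q0 (q 0) (q 1) (q 2) with hB
  have hΓB : Γ * B = 1 := by rw [hΓ']; exact mulGB q0 (q 0) (q 1) (q 2) hq0 hq
  have hu : IsUnit Γ := @isUnit_of_invertible _ _ Γ (invertibleOfRightInverse Γ B hΓB)
  have hinv : Γ⁻¹ = B := inv_eq_right_inv hΓB
  refine ⟨hu, ?_⟩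
  rw [hinv]
  set f := Matrix.toEuclideanCLM (𝕜 := ℝ) B with hf
  have happ : ∀ (x : EuclideanSpace ℝ (Fin 3)) (i : Fin 3), f x i = B.mulVec x i :=
    fun _ _ => rfl
  have hapos : (0:ℝ) < |q0| := abs_pos.mpr hq0
  have hCpos : (0:ℝ) < 2 / |q0| := by positivity
  have hnorm : ∀ x : EuclideanSpace ℝ (Fin 3), ‖x‖ = Real.sqrt (∑ i, x i ^ 2) := by
    intro x; rw [EuclideanSpace.norm_eq]; simp [Real.norm_eq_abs, sq_abs]
  apply le_antisymm
  · apply ContinuousLinearMap.opNorm_le_bound _ hCpos.le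
    intro x
    rw [hnorm, hnorm]
    have h1 : (2 / |q0|) * Real.sqrt (∑ i, x i ^ 2)
        = Real.sqrt ((2/|q0|)^2 * ∑ i, x i ^ 2) := by
      rw [Real.sqrt_mul (by positivity), Real.sqrt_sq hCpos.le]
    rw [h1]
    apply Real.sqrt_le_sqrt
    have hrw : ((2/|q0|):ℝ)^2 = 4 / q0^2 := by
      rw [div_pow, sq_abs]; norm_num
    rw [hrw]
    simp only [happ]
    exact mulVec_sq_bound q0 (q 0) (q 1) (q 2) hq0 hq x
  · by_cases hz : q 0 = 0 ∧ q 1 = 0 ∧ q 2 = 0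
    · obtain ⟨h1, h2, h3⟩ := hz
      have ha1 : q0^2 = 1 := by rw [h1, h2, h3] at hq; linarith
      have habs : |q0| = 1 := by nlinarith [sq_abs q0, abs_nonneg q0]
      set w : EuclideanSpace ℝ (Fin 3) := EuclideanSpace.single 0 1 with hw
      have hwn : ‖w‖ = 1 := by simp [hw]
      have hfw : f w = (2 * q0) • w := by
        ext i
        rw [happ]
        have hws : ∀ j, w j = if j = 0 then 1 else 0 := by
          intro j; simp [hw, EuclideanSpace.single_apply]
        fin_cases i <;>
          simp [hB, Bmat, Matrix.mulVec, dotProduct, Fin.sum_univ_three,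
            hws, h1, h2, h3] <;>
          field_simp <;> ring
      have hfwn : ‖f w‖ = 2 / |q0| := by
        rw [hfw, norm_smul, hwn, mul_one, Real.norm_eq_abs, abs_mul, habs]
        norm_num
      calc 2 / |q0| = ‖f w‖ := hfwn.symm
        _ ≤ ‖f‖ * ‖w‖ := f.le_opNorm w
        _ = ‖f‖ := by rw [hwn, mul_one]
    · have hqne : q ≠ 0 := by
        intro h
        exact hz ⟨by rw [h]; rfl, by rw [h]; rfl, by rw [h]; rfl⟩
      have hqpos : (0:ℝ) < ‖q‖ := norm_pos_iff.mpr hqne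
      have hfq : f q = (2 / q0) • q := by
        ext i
        rw [happ]
        have := mulVec_self q0 (q 0) (q 1) (q 2) hq0 hq q rfl rfl rfl
        rw [hB, this]
        simp
      have hfqn : ‖f q‖ = (2 / |q0|) * ‖q‖ := by
        rw [hfq, norm_smul, Real.norm_eq_abs, abs_div]
        norm_num
      have hle : (2 / |q0|) * ‖q‖ ≤ ‖f‖ * ‖q‖ := by
        rw [← hfqn]; exact f.le_opNorm q
      exact le_of_mul_le_mul_right hle hqpos
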